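/- Fix an integer n ≥ 1. Let ψ : ℝ → ℝ be (n−1)-times continuously differentiable such that for every θ ∈ ℤ the restriction of ψ to [θ/2, (θ+1)/2] coincides with a polynomial of degree at most n, and assume |ψ^{(α)}(x)| ≤ C e^{−γ|x|} for all x ∈ ℝ and all 0 ≤ α ≤ n−1, where C, γ > 0. Let η : ℝ → ℝ be integrable, vanishing outside (−2^{−5}, 2^{−5}), with ∫_ℝ y^M η(y) dy = 0 for 0 ≤ M ≤ n+2, and such that y ↦ y^n η(y) is either odd or even. Then for every real number a ≥ 1 and every λ ∈ ℤ: |∫_ℝ η(a(y − λ/2)) ψ(y) dy| ≤ 8 C e^{γ} a^{−(n+1)} e^{−γ|λ|/2} · |∫_0^{1/2} u^n η(u) du|. -/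

import Mathlib

open MeasureTheory Set Finset Real Nat

lemma aux_contDiff_eval (P : Polynomial ℝ) (k : WithTop ℕ∞) :
    ContDiff ℝ k (fun x => P.eval x) := by
  induction P using Polynomial.induction_on' with
  | add p q hp hq => simpa [Polynomial.eval_add] using hp.add hq
  | monomial i a =>
      simpa [Polynomial.eval_monomial] using (contDiff_const (c := a)).mul (contDiff_id.pow i)

lemma aux_iteratedDeriv_polyeval (R : Polynomial ℝ) (j : ℕ) :
    iteratedDeriv j (fun x => R.eval x) = fun x => (Polynomial.derivative^[j] R).eval x := by
  induction j with
  | zero => simp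
  | succ j ih =>
    rw [iteratedDeriv_succ, ih, Function.iterate_succ_apply']
    funext x
    exact Polynomial.deriv (p := Polynomial.derivative^[j] R)

lemma aux_within_eq_global {f : ℝ → ℝ} {k : ℕ} (hf : ContDiff ℝ (k : ℕ) f)
    {s : Set ℝ} (hs : UniqueDiffOn ℝ s) {x : ℝ} (hx : x ∈ s) {j : ℕ} (hj : j ≤ k) :
    iteratedDerivWithin j f s x = iteratedDeriv j f x := by
  have H : HasFTaylorSeriesUpTo (k : ℕ∞) f (ftaylorSeries ℝ f) :=
    contDiff_iff_ftaylorSeries.mp (by exact_mod_cast hf)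
  have h2 := (H.hasFTaylorSeriesUpToOn s).eq_iteratedFDerivWithin_of_uniqueDiffOn
    (by exact_mod_cast hj) hs hx
  rw [iteratedDerivWithin_eq_iteratedFDerivWithin, iteratedDeriv_eq_iteratedFDeriv, ← h2]
  rfl

lemma aux_match {f : ℝ → ℝ} {k : ℕ} (hf : ContDiff ℝ (k : ℕ) f) (R : Polynomial ℝ)
    {A B : ℝ} (hAB : A < B) (heq : ∀ x ∈ Set.Icc A B, f x = R.eval x)
    {x : ℝ} (hx : x ∈ Set.Icc A B) {j : ℕ} (hj : j ≤ k) :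
    iteratedDeriv j f x = (Polynomial.derivative^[j] R).eval x := by
  have hu : UniqueDiffOn ℝ (Set.Icc A B) := uniqueDiffOn_Icc hAB
  have h1 := aux_within_eq_global hf hu hx hj
  have h2 := aux_within_eq_global (f := fun x => R.eval x) (k := k)
    (aux_contDiff_eval R _) hu hx hj
  have h3 : iteratedDerivWithin j f (Set.Icc A B) x
      = iteratedDerivWithin j (fun x => R.eval x) (Set.Icc A B) x :=
    iteratedDerivWithin_congr (fun y hy => heq y hy) hx
  rw [← h1, h3, h2, aux_iteratedDeriv_polyeval]

set_option maxHeartbeats 1000000 in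
theorem stmt_15
    (n : ℕ) (hn : 1 ≤ n) (ψ : ℝ → ℝ)
    (hsmooth : ContDiff ℝ (n - 1 : ℕ) ψ)
    (hpoly : ∀ θ : ℤ, ∃ c : ℕ → ℝ,
      ∀ x ∈ Set.Icc ((θ : ℝ) / 2) (((θ : ℝ) + 1) / 2),
        ψ x = ∑ j ∈ Finset.range (n + 1), c j * x ^ j)
    (C γ : ℝ) (hC : 0 < C) (hγ : 0 < γ)
    (hdecay : ∀ α : ℕ, α ≤ n - 1 → ∀ x : ℝ,
      |iteratedDeriv α ψ x| ≤ C * Real.exp (-γ * |x|))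
    (η : ℝ → ℝ) (hη : MeasureTheory.Integrable η)
    (hηsupp : ∀ y : ℝ, y ∉ Set.Ioo (-(2 : ℝ) ^ (-5 : ℤ)) ((2 : ℝ) ^ (-5 : ℤ)) → η y = 0)
    (hηmom : ∀ M : ℕ, M ≤ n + 2 → ∫ y : ℝ, y ^ M * η y = 0)
    (hparity :
      (∀ y : ℝ, (-y) ^ n * η (-y) = -(y ^ n * η y)) ∨
      (∀ y : ℝ, (-y) ^ n * η (-y) = y ^ n * η y)) :
    ∀ a : ℝ, 1 ≤ a → ∀ lam : ℤ,
      |∫ y : ℝ, η (a * (y - (lam : ℝ) / 2)) * ψ y| ≤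
        8 * C * Real.exp γ * a ^ (-((n : ℤ) + 1)) *
          Real.exp (-γ * |(lam : ℝ)| / 2) *
          |∫ u in (0 : ℝ)..(1 / 2), u ^ n * η u| := by
  intro a ha lam
  have ha0 : (0:ℝ) < a := lt_of_lt_of_le one_pos ha
  set m : ℝ := (lam : ℝ) / 2 with hm
  -- small support bound
  have hsupp' : ∀ t : ℝ, (1:ℝ)/2 ≤ |t| → η t = 0 := by
    intro t ht
    apply hηsupp
    intro hmem
    rw [Set.mem_Ioo] at hmem
    have : |t| < (2:ℝ)^(-5:ℤ) := abs_lt.mpr ⟨hmem.1, hmem.2⟩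
    have h32 : (2:ℝ)^(-5:ℤ) = 1/32 := by norm_num
    rw [h32] at this; linarith
  -- the polynomial pieces
  obtain ⟨cm, hcm⟩ := hpoly (lam - 1)
  obtain ⟨cp, hcp⟩ := hpoly lam
  set P : Polynomial ℝ := ∑ j ∈ Finset.range (n+1), Polynomial.C (cm j) * Polynomial.X ^ j with hPdef
  set Q : Polynomial ℝ := ∑ j ∈ Finset.range (n+1), Polynomial.C (cp j) * Polynomial.X ^ j with hQdef
  have hψP : ∀ x ∈ Set.Icc (m - 1/2) m, ψ x = P.eval x := by
    intro x hx
    have hx' : x ∈ Set.Icc (((lam - 1 : ℤ) : ℝ) / 2) ((((lam - 1 : ℤ) : ℝ) + 1) / 2) := by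
      constructor
      · push_cast; rw [hm] at hx; linarith [hx.1]
      · push_cast; rw [hm] at hx; linarith [hx.2]
    rw [hcm x hx', hPdef]
    simp [Polynomial.eval_finset_sum]
  have hψQ : ∀ x ∈ Set.Icc m (m + 1/2), ψ x = Q.eval x := by
    intro x hx
    have hx' : x ∈ Set.Icc (((lam : ℤ) : ℝ) / 2) ((((lam : ℤ) : ℝ) + 1) / 2) := by
      constructor
      · push_cast; rw [hm] at hx; linarith [hx.1]
      · push_cast; rw [hm] at hx; linarith [hx.2]
    rw [hcp x hx', hQdef]
    simp [Polynomial.eval_finset_sum]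
  have hPdeg : P.natDegree ≤ n := by
    apply Polynomial.natDegree_sum_le_of_forall_le
    intro i hi
    exact le_trans (Polynomial.natDegree_C_mul_X_pow_le _ _) (by
      exact Nat.lt_succ_iff.mp (Finset.mem_range.mp hi))
  have hQdeg : Q.natDegree ≤ n := by
    apply Polynomial.natDegree_sum_le_of_forall_le
    intro i hi
    exact le_trans (Polynomial.natDegree_C_mul_X_pow_le _ _) (by
      exact Nat.lt_succ_iff.mp (Finset.mem_range.mp hi))
  -- derivative matching at the knot
  have hmem1 : m ∈ Set.Icc (m - 1/2) m := ⟨by linarith, le_refl m⟩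
  have hmem2 : m ∈ Set.Icc m (m + 1/2) := ⟨le_refl m, by linarith⟩
  have key : ∀ j, j ≤ n - 1 →
      (Polynomial.derivative^[j] P).eval m = (Polynomial.derivative^[j] Q).eval m := by
    intro j hj
    have h1 := aux_match (k := n - 1) hsmooth P (by linarith : m - 1/2 < m) hψP hmem1 hj
    have h2 := aux_match (k := n - 1) hsmooth Q (by linarith : m < m + 1/2) hψQ hmem2 hj
    rw [← h1, ← h2]
  -- R and d
  set R : Polynomial ℝ := Q - P with hRdef
  set d : ℝ := (Polynomial.taylor m R).coeff n with hddef
  have hRdeg : R.natDegree ≤ n :=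
    le_trans (Polynomial.natDegree_sub_le _ _) (max_le hQdeg hPdeg)
  have hcoeff0 : ∀ k, k < n → (Polynomial.taylor m R).coeff k = 0 := by
    intro k hk
    rw [Polynomial.taylor_coeff]
    have h2 : (Polynomial.derivative^[k] R).eval m = 0 := by
      rw [hRdef, Polynomial.iterate_derivative_sub, Polynomial.eval_sub,
        key k (by omega)]
      ring
    have h3 := congrArg (Polynomial.eval m)
      (congrFun (Polynomial.factorial_smul_hasseDeriv (R := ℝ) k) R)
    rw [h2] at h3
    have h4 : (Nat.factorial k : ℝ) * (Polynomial.hasseDeriv k R).eval m = 0 := by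
      simpa [LinearMap.smul_apply, Polynomial.eval_smul, nsmul_eq_mul] using h3
    have h5 : (Nat.factorial k : ℝ) ≠ 0 := by exact_mod_cast (Nat.factorial_pos k).ne'
    exact (mul_eq_zero.mp h4).resolve_left h5
  have hReval : ∀ x : ℝ, R.eval x = d * (x - m) ^ n := by
    intro x
    have h1 : R.eval x = (Polynomial.taylor m R).eval (x - m) :=
      (Polynomial.taylor_eval_sub m R x).symm
    have hdeg' : (Polynomial.taylor m R).natDegree < n + 1 := by
      rw [Polynomial.natDegree_taylor]; omega
    rw [h1, Polynomial.eval_eq_sum_range' hdeg']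
    rw [Finset.sum_eq_single_of_mem n (Finset.self_mem_range_succ n)
      (fun b hb hbn => by
        have hb' : b < n := by
          have := Finset.mem_range.mp hb; omega
        rw [hcoeff0 b hb']; ring)]
  -- ========== bound on d ==========
  have hfact1 : (1:ℝ) ≤ (Nat.factorial n : ℝ) := by
    exact_mod_cast Nat.succ_le_of_lt (Nat.factorial_pos n)
  set Pd := Polynomial.derivative^[n-1] P with hPd
  set Qd := Polynomial.derivative^[n-1] Q with hQd
  have hf1 := aux_match (k := n - 1) hsmooth P (show m - 1/2 < m by linarith) hψP
      (⟨le_refl _, by linarith⟩ : m - 1/2 ∈ Set.Icc (m - 1/2) m) (le_refl (n-1))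
  have hf2 := aux_match (k := n - 1) hsmooth P (show m - 1/2 < m by linarith) hψP hmem1
      (le_refl (n-1))
  have hf4 := aux_match (k := n - 1) hsmooth Q (show m < m + 1/2 by linarith) hψQ
      (⟨by linarith, le_refl _⟩ : m + 1/2 ∈ Set.Icc m (m + 1/2)) (le_refl (n-1))
  have hRpoly : R = Polynomial.C d * (Polynomial.X - Polynomial.C m) ^ n := by
    apply Polynomial.funext
    intro x
    rw [hReval x]
    simp [Polynomial.eval_mul, Polynomial.eval_pow]
  have hdesc : n.descFactorial (n-1) = Nat.factorial n := by
    have h1 : n - 1 + 1 = n := Nat.succ_pred_eq_of_pos hn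
    have h2 := Nat.descFactorial_succ n (n-1)
    rw [h1] at h2
    rw [← Nat.descFactorial_self n, h2, show n - (n-1) = 1 by omega, one_mul]
  have hRd : ∀ x : ℝ, Qd.eval x - Pd.eval x = d * (Nat.factorial n : ℝ) * (x - m) := by
    intro x
    have h1 : Polynomial.derivative^[n-1] R = Qd - Pd := by
      rw [hRdef, Polynomial.iterate_derivative_sub]
    have h2 : Polynomial.derivative^[n-1] R
        = Polynomial.C d * ((n.descFactorial (n-1)) •
            (Polynomial.X - Polynomial.C m) ^ (n - (n-1))) := by
      rw [hRpoly, Polynomial.iterate_derivative_C_mul, Polynomial.iterate_derivative_X_sub_pow]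
    rw [show n - (n-1) = 1 by omega, hdesc] at h2
    have h3 : Qd - Pd = Polynomial.C d *
        ((Nat.factorial n) • (Polynomial.X - Polynomial.C m) ^ 1) := by rw [← h1, h2]
    have h4 := congrArg (Polynomial.eval x) h3
    simp only [Polynomial.eval_sub, Polynomial.eval_mul, Polynomial.eval_smul,
      Polynomial.eval_pow, Polynomial.eval_C, Polynomial.eval_X, nsmul_eq_mul,
      Polynomial.eval_natCast, pow_one] at h4
    rw [h4]; ring
  have hPdDeg : Pd.natDegree < 2 := by
    have h1 := Polynomial.natDegree_iterate_derivative P (n-1)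
    rw [← hPd] at h1
    omega
  have haff : ∀ S : Polynomial ℝ, S.natDegree < 2 →
      S.eval (m + 1/2) + S.eval (m - 1/2) = 2 * S.eval m := by
    intro S hS
    rw [Polynomial.eval_eq_sum_range' hS, Polynomial.eval_eq_sum_range' hS,
      Polynomial.eval_eq_sum_range' hS]
    simp [Finset.sum_range_succ]
    ring
  have hS : d * (Nat.factorial n : ℝ) * (1/2) =
      iteratedDeriv (n-1) ψ (m + 1/2) - 2 * iteratedDeriv (n-1) ψ m
        + iteratedDeriv (n-1) ψ (m - 1/2) := by
    have e1 := hRd (m + 1/2)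
    have e2 := haff Pd hPdDeg
    rw [hf1, hf2, hf4]
    rw [show m + 1/2 - m = 1/2 by ring] at e1
    linarith
  have hexp : ∀ x : ℝ, |x - m| ≤ 1/2 →
      C * Real.exp (-γ * |x|) ≤ C * Real.exp (γ/2) * Real.exp (-γ * |m|) := by
    intro x hx
    rw [mul_assoc, ← Real.exp_add]
    apply mul_le_mul_of_nonneg_left _ hC.le
    apply Real.exp_le_exp.mpr
    have h1 : |m| - |x| ≤ |m - x| := abs_sub_abs_le_abs_sub m x
    have h2 : |m - x| ≤ 1/2 := by rw [abs_sub_comm]; exact hx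
    nlinarith
  have hval : ∀ x : ℝ, |x - m| ≤ 1/2 →
      |iteratedDeriv (n-1) ψ x| ≤ C * Real.exp (γ/2) * Real.exp (-γ * |m|) :=
    fun x hx => le_trans (hdecay (n-1) (le_refl _) x) (hexp x hx)
  have hdb : |d| ≤ 8 * C * Real.exp γ * Real.exp (-γ * |m|) := by
    have h1 := hval (m + 1/2) (by rw [show m + 1/2 - m = 1/2 by ring, abs_of_nonneg (by norm_num : (0:ℝ) ≤ 1/2)])
    have h2 := hval m (by simp)
    have h3 := hval (m - 1/2) (by rw [show m - 1/2 - m = -(1/2) by ring, abs_neg, abs_of_nonneg (by norm_num : (0:ℝ) ≤ 1/2)])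
    set K := C * Real.exp (γ/2) * Real.exp (-γ * |m|) with hK
    have hd2 : |d * (Nat.factorial n : ℝ) * (1/2)| ≤ 4 * K := by
      rw [hS]
      rw [abs_le] at h1 h2 h3
      rw [abs_le]
      exact ⟨by linarith [h1.1, h2.2, h3.1], by linarith [h1.2, h2.1, h3.2]⟩
    have hd3 : |d| * (Nat.factorial n : ℝ) * (1/2) ≤ 4 * K := by
      have : |d * (Nat.factorial n : ℝ) * (1/2)|
          = |d| * (Nat.factorial n : ℝ) * (1/2) := by
        rw [abs_mul, abs_mul]
        rw [abs_of_nonneg (by positivity : (0:ℝ) ≤ (Nat.factorial n : ℝ))]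
        norm_num
      rw [← this]; exact hd2
    have hd4 : |d| ≤ 8 * K := by
      have h7 : |d| * 1 * (1/2) ≤ |d| * (Nat.factorial n : ℝ) * (1/2) :=
        mul_le_mul_of_nonneg_right
          (mul_le_mul_of_nonneg_left hfact1 (abs_nonneg d)) (by norm_num)
      linarith
    have hKle : 8 * K ≤ 8 * C * Real.exp γ * Real.exp (-γ * |m|) := by
      have he : Real.exp (γ/2) ≤ Real.exp γ := Real.exp_le_exp.mpr (by linarith)
      have h6 : C * Real.exp (γ/2) * Real.exp (-γ * |m|)
          ≤ C * Real.exp γ * Real.exp (-γ * |m|) :=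
        mul_le_mul_of_nonneg_right (mul_le_mul_of_nonneg_left he hC.le) (Real.exp_pos _).le
      rw [hK]; linarith
    linarith
  -- ========== integral computation ==========
  set w : ℝ → ℝ := fun y => η (a * (y - m)) with hwdef
  have hwzero : ∀ y : ℝ, 1 ≤ |y - m| → w y = 0 := by
    intro y hy
    apply hsupp'
    rw [abs_mul, abs_of_pos ha0]
    calc (1:ℝ)/2 ≤ 1 * |y - m| := by rw [one_mul]; linarith
      _ ≤ a * |y - m| := mul_le_mul_of_nonneg_right ha (abs_nonneg _)
  have hwint : Integrable w := (hη.comp_mul_left' ha0.ne').comp_sub_right m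
  have hwm : AEStronglyMeasurable w volume := hwint.aestronglyMeasurable
  have hgint : ∀ i : ℕ, Integrable (fun y => w y * (y - m)^i) := by
    intro i
    apply Integrable.mono' hwint.abs
      (hwm.mul (Continuous.aestronglyMeasurable (by fun_prop)))
    refine ae_of_all _ (fun y => ?_)
    by_cases hy : |y - m| ≤ 1
    · have hb1 : |(y-m)^i| ≤ 1 := by
        rw [abs_pow]; exact pow_le_one₀ (abs_nonneg _) hy
      calc ‖w y * (y-m)^i‖ = |w y| * |(y-m)^i| := by rw [Real.norm_eq_abs, abs_mul]
        _ ≤ |w y| * 1 := mul_le_mul_of_nonneg_left hb1 (abs_nonneg _)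
        _ = |w y| := mul_one _
    · have h0 : w y = 0 := hwzero y (by linarith [not_le.mp hy])
      simp [h0]
  have hmaxabs : ∀ t : ℝ, |max t 0| ≤ |t| := fun t => by
    rw [abs_of_nonneg (le_max_right t 0)]
    exact max_le (le_abs_self t) (abs_nonneg t)
  have hgmaxint : Integrable (fun y => w y * max (y - m) 0 ^ n) := by
    apply Integrable.mono' hwint.abs
      (hwm.mul (Continuous.aestronglyMeasurable (by fun_prop)))
    refine ae_of_all _ (fun y => ?_)
    by_cases hy : |y - m| ≤ 1
    · have hb1 : |max (y - m) 0 ^ n| ≤ 1 := by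
        rw [abs_pow]
        exact pow_le_one₀ (abs_nonneg _) (le_trans (hmaxabs _) hy)
      calc ‖w y * max (y - m) 0 ^ n‖ = |w y| * |max (y - m) 0 ^ n| := by
            rw [Real.norm_eq_abs, abs_mul]
        _ ≤ |w y| * 1 := mul_le_mul_of_nonneg_left hb1 (abs_nonneg _)
        _ = |w y| := mul_one _
    · have h0 : w y = 0 := hwzero y (by linarith [not_le.mp hy])
      simp [h0]
  have hIzero : ∀ i : ℕ, i ≤ n → (∫ y : ℝ, w y * (y - m)^i) = 0 := by
    intro i hi
    have h1 : (∫ y : ℝ, w y * (y - m)^i) = ∫ u : ℝ, η (a * u) * u^i :=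
      integral_sub_right_eq_self (fun u => η (a * u) * u ^ i) m
    have h2 : (fun u : ℝ => η (a * u) * u^i)
        = fun u => (a⁻¹)^i * ((fun t => η t * t^i) (a * u)) := by
      funext u
      show η (a * u) * u ^ i = a⁻¹ ^ i * (η (a * u) * (a * u) ^ i)
      have ha' : a ≠ 0 := ha0.ne'
      rw [mul_pow]
      field_simp
      rw [mul_assoc, ← mul_pow, one_div, inv_mul_cancel₀ ha', one_pow, mul_one]
    rw [h1, h2, MeasureTheory.integral_const_mul,
      MeasureTheory.Measure.integral_comp_mul_left (fun t => η t * t^i) a]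
    have h3 : (fun t : ℝ => η t * t ^ i) = fun t => t ^ i * η t :=
      funext fun t => mul_comm _ _
    rw [h3, hηmom i (by omega)]
    simp
  have hmax_eq : (fun t : ℝ => η t * max t 0 ^ n)
      = Set.indicator (Set.Ioc (0:ℝ) (1/2)) (fun t => t^n * η t) := by
    funext t
    by_cases h1 : t ∈ Set.Ioc (0:ℝ) (1/2)
    · rw [Set.indicator_of_mem h1, max_eq_left h1.1.le]
      ring
    · rw [Set.indicator_of_notMem h1]
      by_cases h2 : t ≤ 0
      · rw [max_eq_right h2, zero_pow (by omega : n ≠ 0), mul_zero]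
      · have h3 : 1/2 < t := by
          simp only [Set.mem_Ioc, not_and, not_le] at h1
          exact h1 (lt_of_not_ge h2)
        rw [hsupp' t (by rw [abs_of_pos (by linarith)]; linarith), zero_mul]
  have hJint : (∫ t : ℝ, η t * max t 0 ^ n) = ∫ u in (0:ℝ)..(1/2), u^n * η u := by
    rw [hmax_eq, MeasureTheory.integral_indicator measurableSet_Ioc]
    exact (intervalIntegral.integral_of_le (by norm_num : (0:ℝ) ≤ 1/2)).symm
  set J : ℝ := ∫ u in (0:ℝ)..(1/2), u^n * η u with hJdef
  have hImax : (∫ y : ℝ, w y * max (y - m) 0 ^ n) = (a⁻¹)^n * (a⁻¹ * J) := by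
    have h1 : (∫ y : ℝ, w y * max (y - m) 0 ^ n) = ∫ u : ℝ, η (a * u) * max u 0 ^ n :=
      integral_sub_right_eq_self (fun u => η (a * u) * max u 0 ^ n) m
    have hmm : ∀ u : ℝ, max u 0 = a⁻¹ * max (a * u) 0 := by
      intro u
      rw [mul_max_of_nonneg _ _ (inv_nonneg.mpr ha0.le), inv_mul_cancel_left₀ ha0.ne', mul_zero]
    have h2 : (fun u : ℝ => η (a * u) * max u 0 ^ n)
        = fun u => (a⁻¹)^n * ((fun t => η t * max t 0 ^ n) (a * u)) := by
      funext u
      show η (a * u) * max u 0 ^ n = a⁻¹ ^ n * (η (a * u) * max (a * u) 0 ^ n)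
      rw [hmm u, mul_pow]
      ring
    rw [h1, h2, MeasureTheory.integral_const_mul,
      MeasureTheory.Measure.integral_comp_mul_left (fun t => η t * max t 0 ^ n) a,
      hJint, abs_of_pos (inv_pos.mpr ha0), smul_eq_mul]
  set b : ℕ → ℝ := fun i => (Polynomial.taylor m P).coeff i with hbdef
  have hPtaylor : ∀ x : ℝ, P.eval x = ∑ i ∈ Finset.range (n+1), b i * (x - m)^i := by
    intro x
    have hdeg' : (Polynomial.taylor m P).natDegree < n + 1 := by
      rw [Polynomial.natDegree_taylor]; omega
    rw [← Polynomial.taylor_eval_sub m P x, Polynomial.eval_eq_sum_range' hdeg']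
  have hpoint : ∀ y : ℝ, w y * ψ y
      = (∑ i ∈ Finset.range (n+1), b i * (w y * (y - m)^i))
        + d * (w y * max (y - m) 0 ^ n) := by
    intro y
    by_cases h0 : w y = 0
    · rw [h0]
      simp
    · have hy : |y - m| < 1/2 := by
        by_contra hy
        push_neg at hy
        refine h0 (hsupp' _ ?_)
        rw [abs_mul, abs_of_pos ha0]
        calc (1:ℝ)/2 ≤ 1 * |y - m| := by rw [one_mul]; linarith
          _ ≤ a * |y - m| := mul_le_mul_of_nonneg_right ha (abs_nonneg _)
      have hy1 := (abs_lt.mp hy).1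
      have hy2 := (abs_lt.mp hy).2
      have hsum : (∑ i ∈ Finset.range (n+1), b i * (w y * (y - m)^i))
          = w y * ∑ i ∈ Finset.range (n+1), b i * (y - m)^i := by
        rw [Finset.mul_sum]
        exact Finset.sum_congr rfl (fun i _ => by ring)
      rw [hsum, ← hPtaylor]
      rcases le_total y m with hc | hc
      · rw [show w y * ψ y = w y * ψ y from rfl, hψP y ⟨by linarith, hc⟩,
          max_eq_right (by linarith : y - m ≤ 0), zero_pow (by omega : n ≠ 0)]
        ring
      · have hq : Q.eval y = P.eval y + d * (y - m)^n := by
          have h5 := hReval y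
          rw [hRdef, Polynomial.eval_sub] at h5
          linarith
        rw [hψQ y ⟨hc, by linarith⟩, hq, max_eq_left (by linarith : 0 ≤ y - m)]
        ring
  have hsplit : (∫ y : ℝ, w y * ψ y) = d * ((a⁻¹)^n * (a⁻¹ * J)) := by
    rw [show (fun y => w y * ψ y)
        = fun y => (∑ i ∈ Finset.range (n+1), b i * (w y * (y - m)^i))
          + d * (w y * max (y - m) 0 ^ n) from funext hpoint]
    have hint1 : Integrable
        (fun y => ∑ i ∈ Finset.range (n+1), b i * (w y * (y - m)^i)) := by
      apply integrable_finset_sum (f := fun i y => b i * (w y * (y - m)^i))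
      exact fun i _ => (hgint i).const_mul (b i)
    have hint2 : Integrable (fun y => d * (w y * max (y - m) 0 ^ n)) :=
      hgmaxint.const_mul d
    rw [MeasureTheory.integral_add hint1 hint2]
    rw [MeasureTheory.integral_finset_sum (f := fun i y => b i * (w y * (y - m)^i)) _
      (fun i _ => (hgint i).const_mul (b i))]
    have hz : ∀ i ∈ Finset.range (n+1), (∫ y : ℝ, b i * (w y * (y - m)^i)) = 0 := by
      intro i hi
      rw [MeasureTheory.integral_const_mul,
        hIzero i (Nat.lt_succ_iff.mp (Finset.mem_range.mp hi)), mul_zero]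
    rw [Finset.sum_congr rfl hz, Finset.sum_const_zero, zero_add,
      MeasureTheory.integral_const_mul, hImax]
  have hzpow : a ^ (-((n:ℤ)+1)) = (a⁻¹)^n * a⁻¹ := by
    rw [show (-((n:ℤ)+1)) = -((n+1 : ℕ) : ℤ) by push_cast; ring]
    rw [zpow_neg, zpow_natCast, pow_succ, mul_inv, inv_pow]
  have hmabs : -γ * |m| = -γ * |(lam:ℝ)| / 2 := by
    rw [hm, abs_div, abs_two]; ring
  have habsI : |∫ y : ℝ, η (a * (y - m)) * ψ y| = |d| * ((a⁻¹)^n * (a⁻¹ * |J|)) := by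
    rw [show (∫ y : ℝ, η (a * (y - m)) * ψ y) = ∫ y : ℝ, w y * ψ y from rfl, hsplit,
      abs_mul, abs_mul, abs_mul, abs_pow, abs_of_pos (inv_pos.mpr ha0)]
  calc |∫ y : ℝ, η (a * (y - m)) * ψ y| = |d| * ((a⁻¹)^n * (a⁻¹ * |J|)) := habsI
    _ ≤ (8 * C * Real.exp γ * Real.exp (-γ * |m|)) * ((a⁻¹)^n * (a⁻¹ * |J|)) := by
        apply mul_le_mul_of_nonneg_right hdb (by positivity)
    _ = 8 * C * Real.exp γ * a ^ (-((n:ℤ)+1)) * Real.exp (-γ * |(lam:ℝ)| / 2) * |J| := by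
        rw [hzpow, ← hmabs]; ring
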